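/- Let W ⊂ ℝ^I be compact and J a positive integer. Define the sum-of-power-sums map S : W^J → ℝ^{κ(I,J)} by S(a₁,…,a_J) = ∑_{j=1}^J η_{I,J}(a_j), where η_{I,J} collects monomials of total degree 1 through J. Then S is constant on orbits of the symmetric group S_J acting by permuting the J arguments, and the induced map on the quotient W^J / S_J is injective; moreover, since S is continuous and W^J / S_J is compact Hausdorff, the induced map is a homeomorphism onto its image, so its inverse Λ is continuous. -/

import Mathlib

section Aux

open Finset in
/-- Equal power sums (degrees 1..J) of two J-tuples of reals give equal elementary
symmetric functions, by Newton's identities. -/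
lemma esymm_eq_of_psum_eq (J : ℕ) (u v : Fin J → ℝ)
    (h : ∀ k, 1 ≤ k → k ≤ J → ∑ j, u j ^ k = ∑ j, v j ^ k) (k : ℕ) :
    (Finset.univ.val.map u).esymm k = (Finset.univ.val.map v).esymm k := by
  induction k using Nat.strong_induction_on with
  | _ k ih =>
  rcases Nat.eq_zero_or_pos k with rfl | hk
  · simp [Multiset.esymm]
  rcases le_or_gt k J with hkJ | hkJ
  · have hu := congrArg (MvPolynomial.aeval u) (MvPolynomial.mul_esymm_eq_sum (Fin J) ℝ k)
    have hv := congrArg (MvPolynomial.aeval v) (MvPolynomial.mul_esymm_eq_sum (Fin J) ℝ k)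
    simp only [map_mul, map_sum, map_pow, map_natCast, map_neg, map_one,
      MvPolynomial.aeval_esymm_eq_multiset_esymm, MvPolynomial.psum, MvPolynomial.aeval_X] at hu hv
    apply mul_left_cancel₀ (a := (k : ℝ)) (Nat.cast_ne_zero.mpr hk.ne')
    rw [hu, hv]
    congr 1
    apply Finset.sum_congr rfl
    intro p hp
    simp only [Finset.mem_filter, Finset.mem_antidiagonal] at hp
    have h1 : p.1 < k := hp.2
    have h0 : p.1 + p.2 = k := by simpa using hp.1
    have h2 : 1 ≤ p.2 := by omega
    have h3 : p.2 ≤ J := by omega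
    rw [ih p.1 h1, h p.2 h2 h3]
  · have hcu : Multiset.card (Multiset.map u univ.val) < k := by simpa using hkJ
    have hcv : Multiset.card (Multiset.map v univ.val) < k := by simpa using hkJ
    rw [Multiset.esymm, Multiset.esymm, Multiset.powersetCard_eq_empty _ hcu,
      Multiset.powersetCard_eq_empty _ hcv]

/-- Multisets of reals with the same cardinality and equal elementary symmetric
functions are equal (they are the root multisets of the same polynomial). -/
lemma multiset_eq_of_esymm_eq (M N : Multiset ℝ) (hc : Multiset.card M = Multiset.card N)
    (h : ∀ k, M.esymm k = N.esymm k) : M = N := by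
  have hp : (M.map fun t => Polynomial.X - Polynomial.C t).prod
      = (N.map fun t => Polynomial.X - Polynomial.C t).prod := by
    apply Polynomial.ext; intro n
    rcases le_or_gt n (Multiset.card M) with hn | hn
    · rw [Multiset.prod_X_sub_C_coeff M hn, Multiset.prod_X_sub_C_coeff N (hc ▸ hn), hc, h]
    · rw [Polynomial.coeff_eq_zero_of_natDegree_lt, Polynomial.coeff_eq_zero_of_natDegree_lt] <;>
        rw [Polynomial.natDegree_multiset_prod_X_sub_C_eq_card] <;> omega
  have := congrArg Polynomial.roots hp
  rwa [Polynomial.roots_multiset_prod_X_sub_C, Polynomial.roots_multiset_prod_X_sub_C] at this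

/-- If the lists of values of two tuples are permutations of one another, the tuples
differ by a permutation of the index set. -/
lemma exists_perm_of_ofFn_perm : ∀ {n : ℕ} {α : Type*} (a b : Fin n → α),
    List.Perm (List.ofFn a) (List.ofFn b) → ∃ σ : Equiv.Perm (Fin n), b = a ∘ σ := by
  intro n
  induction n with
  | zero => exact fun a b _ => ⟨Equiv.refl _, funext fun j => j.elim0⟩
  | succ n ihn =>
    intro α a b hp
    have hb0 : b 0 ∈ List.ofFn a := hp.symm.mem_iff.mp (by rw [List.mem_ofFn]; exact ⟨0, rfl⟩)
    rw [List.mem_ofFn] at hb0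
    obtain ⟨k, hk⟩ := hb0
    set a' : Fin (n+1) → α := a ∘ Equiv.swap 0 k with ha'
    have hpa' : List.Perm (List.ofFn a') (List.ofFn b) :=
      ((Equiv.swap 0 k).ofFn_comp_perm a).trans hp
    have h0 : a' 0 = b 0 := by simp [ha', Equiv.swap_apply_left, hk]
    rw [List.ofFn_succ, List.ofFn_succ, h0] at hpa'
    have htail := hpa'.cons_inv
    obtain ⟨τ, hτ⟩ := ihn (fun i => a' i.succ) (fun i => b i.succ) htail
    refine ⟨Equiv.Perm.decomposeFin.symm (k, τ), funext fun j => ?_⟩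
    refine Fin.cases ?_ (fun i => ?_) j
    · simp [hk]
    · have := congrFun hτ i
      simp only [Function.comp] at this ⊢
      rw [Equiv.Perm.decomposeFin_symm_apply_succ]
      rw [this]
      simp [ha']

open Finset in
/-- There is a linear functional separating the points of any finite set. -/
lemma exists_sep (I : ℕ) (S : Finset (Fin I → ℝ)) :
    ∃ t : Fin I → ℝ, ∀ x ∈ S, ∀ y ∈ S, x ≠ y → (∑ i, t i * x i) ≠ (∑ i, t i * y i) := by
  classical
  set Q : MvPolynomial (Fin I) ℝ :=
    ∏ p ∈ (S ×ˢ S).filter (fun p => p.1 ≠ p.2),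
      ∑ i, MvPolynomial.C (p.1 i - p.2 i) * MvPolynomial.X i with hQ
  have hfac : ∀ p ∈ (S ×ˢ S).filter (fun p => p.1 ≠ p.2),
      (∑ i, MvPolynomial.C (p.1 i - p.2 i) * MvPolynomial.X i : MvPolynomial (Fin I) ℝ) ≠ 0 := by
    intro p hp
    simp only [Finset.mem_filter] at hp
    obtain ⟨i, hi⟩ : ∃ i, p.1 i ≠ p.2 i := by
      by_contra hc; push_neg at hc; exact hp.2 (funext hc)
    intro h0
    have := congrArg (MvPolynomial.eval (Pi.single i (1:ℝ))) h0
    simp only [map_sum, map_mul, MvPolynomial.eval_C, MvPolynomial.eval_X, map_zero,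
      Pi.single_apply, mul_ite, mul_one, mul_zero, Finset.sum_ite_eq', Finset.mem_univ,
      if_true] at this
    exact hi (sub_eq_zero.mp this)
  have hQ0 : Q ≠ 0 := Finset.prod_ne_zero_iff.mpr hfac
  have hex : ∃ t : Fin I → ℝ, MvPolynomial.eval t Q ≠ 0 := by
    by_contra hc; push_neg at hc
    exact hQ0 (MvPolynomial.funext (fun x => by rw [hc x, map_zero]))
  obtain ⟨t, ht⟩ := hex
  refine ⟨t, fun x hx y hy hxy => ?_⟩
  have hmem : (x, y) ∈ (S ×ˢ S).filter (fun p => p.1 ≠ p.2) := by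
    simp [Finset.mem_filter, Finset.mem_product, hx, hy, hxy]
  rw [hQ, map_prod] at ht
  have := Finset.prod_ne_zero_iff.mp ht (x, y) hmem
  simp only [map_sum, map_mul, MvPolynomial.eval_C, MvPolynomial.eval_X] at this
  intro heq
  apply this
  have : ∑ i, (x i - y i) * t i = ∑ i, t i * x i - ∑ i, t i * y i := by
    rw [← Finset.sum_sub_distrib]; congr 1; funext i; ring
  rw [this, heq, sub_self]

open Finset in
/-- Equal multisymmetric power sums give equal scalar power sums of the dot products
with any vector t, by the multinomial theorem. -/
lemma dot_psum_eq (I J : ℕ) (a b : Fin J → (Fin I → ℝ))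
    (h : ∀ s : Fin I → ℕ, 1 ≤ ∑ i, s i → ∑ i, s i ≤ J →
      ∑ j, ∏ i, a j i ^ s i = ∑ j, ∏ i, b j i ^ s i)
    (t : Fin I → ℝ) (k : ℕ) (hk1 : 1 ≤ k) (hkJ : k ≤ J) :
    ∑ j, (∑ i, t i * a j i) ^ k = ∑ j, (∑ i, t i * b j i) ^ k := by
  have expand : ∀ x : Fin I → ℝ, (∑ i, t i * x i) ^ k
      = ∑ m ∈ piAntidiag univ k,
          (Nat.multinomial univ m : ℝ) * (∏ i, t i ^ m i) * ∏ i, x i ^ m i := by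
    intro x
    rw [Finset.sum_pow_eq_sum_piAntidiag]
    refine Finset.sum_congr rfl fun m _ => ?_
    rw [mul_assoc, ← Finset.prod_mul_distrib]
    simp_rw [mul_pow]
  simp_rw [expand]
  rw [Finset.sum_comm, Finset.sum_comm (s := univ)]
  refine Finset.sum_congr rfl fun m hm => ?_
  simp_rw [← Finset.mul_sum]
  rw [Finset.mem_piAntidiag] at hm
  congr 1
  exact h m (le_of_le_of_eq hk1 hm.1.symm) (le_of_eq_of_le hm.1 hkJ)

/-- A map of multisets which is injective on their supports reflects equality. -/
lemma multiset_map_injOn_eq {α β : Type*} [DecidableEq α] [DecidableEq β]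
    (M N : Multiset α) (f : α → β)
    (hinj : ∀ x ∈ M + N, ∀ y ∈ M + N, f x = f y → x = y)
    (h : M.map f = N.map f) : M = N := by
  have key : ∀ z ∈ M + N, ∀ (P : Multiset α), (∀ x ∈ P, x ∈ M + N) →
      Multiset.count (f z) (P.map f) = Multiset.count z P := by
    intro z hz P hP
    rw [Multiset.count_map, Multiset.count, Multiset.countP_eq_card_filter]
    congr 1
    apply Multiset.filter_congr
    intro x hx
    constructor
    · intro hf; exact hinj z hz x (hP x hx) hf
    · intro hzx; rw [hzx]
  ext z
  by_cases hz : z ∈ M + N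
  · rw [← key z hz M (fun x hx => Multiset.mem_add.mpr (Or.inl hx)),
      ← key z hz N (fun x hx => Multiset.mem_add.mpr (Or.inr hx)), h]
  · rw [Multiset.mem_add] at hz
    push_neg at hz
    rw [Multiset.count_eq_zero_of_notMem hz.1, Multiset.count_eq_zero_of_notMem hz.2]

open Finset in
/-- Main injectivity: equal multisymmetric power sums of degree 1..J imply the two
J-tuples of points differ by a permutation. -/
lemma perm_of_power_sums_eq (I J : ℕ) (a b : Fin J → (Fin I → ℝ))
    (h : ∀ s : Fin I → ℕ, 1 ≤ ∑ i, s i → ∑ i, s i ≤ J →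
      ∑ j, ∏ i, a j i ^ s i = ∑ j, ∏ i, b j i ^ s i) :
    ∃ σ : Equiv.Perm (Fin J), b = a ∘ σ := by
  classical
  set Ma := Multiset.map a univ.val with hMa
  set Mb := Multiset.map b univ.val with hMb
  obtain ⟨t, ht⟩ := exists_sep I (Ma + Mb).toFinset
  have hps : ∀ k, 1 ≤ k → k ≤ J →
      ∑ j, (fun j => ∑ i, t i * a j i) j ^ k = ∑ j, (fun j => ∑ i, t i * b j i) j ^ k :=
    fun k hk1 hkJ => dot_psum_eq I J a b h t k hk1 hkJ
  have hesymm := esymm_eq_of_psum_eq J (fun j => ∑ i, t i * a j i)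
    (fun j => ∑ i, t i * b j i) hps
  have hscalar := multiset_eq_of_esymm_eq _ _ (by simp) hesymm
  have hmap : Ma.map (fun x => ∑ i, t i * x i) = Mb.map (fun x => ∑ i, t i * x i) := by
    rw [hMa, hMb, Multiset.map_map, Multiset.map_map]
    exact hscalar
  have hEq : Ma = Mb := multiset_map_injOn_eq Ma Mb _
    (fun x hx y hy hf => by
      by_contra hxy
      exact ht x (Multiset.mem_toFinset.mpr hx) y (Multiset.mem_toFinset.mpr hy) hxy hf) hmap
  have hperm : List.Perm (List.ofFn a) (List.ofFn b) := by
    rw [← Multiset.coe_eq_coe, ← Fin.univ_val_map, ← Fin.univ_val_map]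
    exact hEq
  exact exists_perm_of_ofFn_perm a b hperm

end Aux

/-- Tuples of J points in W, up to permutation: the setoid whose quotient is
W^J / S_J. -/
def permSetoid (I J : ℕ) (W : Set (Fin I → ℝ)) :
    Setoid {a : Fin J → (Fin I → ℝ) // ∀ j, a j ∈ W} where
  r a b := ∃ σ : Equiv.Perm (Fin J), (b : Fin J → (Fin I → ℝ)) = ↑a ∘ σ
  iseqv := by
    constructor
    · intro a; exact ⟨Equiv.refl _, rfl⟩
    · rintro a b ⟨σ, h⟩
      exact ⟨σ.symm, by funext j; simp [h, Function.comp]⟩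
    · rintro a b c ⟨σ, h⟩ ⟨τ, h'⟩
      exact ⟨τ.trans σ, by funext j; simp [h', h, Function.comp]⟩

/-- Index set of monomials of total degree 1..J in I variables;
cardinality κ(I,J) = binom(J+I,I) - 1. -/
def MIdx (I J : ℕ) := {s : Fin I → ℕ // 1 ≤ ∑ i, s i ∧ ∑ i, s i ≤ J}

/-- The multisymmetric power sum map η_{I,J}. -/
noncomputable def eta (I J : ℕ) (x : Fin I → ℝ) : MIdx I J → ℝ :=
  fun s => ∏ i, x i ^ s.val i

/-- the sum-of-power-sums map S is S_J-invariant, continuous,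
and induces a topological embedding (a homeomorphism onto its image) of the
quotient W^J / S_J, so the inverse Λ is continuous. -/
theorem stmt_12 (I J : ℕ) (hJ : 0 < J)
    (W : Set (Fin I → ℝ)) (hWc : IsCompact W) :
    -- S is constant on orbits of the symmetric group
    (∀ a : Fin J → (Fin I → ℝ), ∀ σ : Equiv.Perm (Fin J),
      ∑ j, eta I J ((a ∘ σ) j) = ∑ j, eta I J (a j)) ∧
    -- the induced map on W^J / S_J is an embedding (continuous, injective,
    -- with continuous inverse onto its image)
    ∃ Sq : Quotient (permSetoid I J W) → (MIdx I J → ℝ),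
      (∀ a : {a : Fin J → (Fin I → ℝ) // ∀ j, a j ∈ W},
        Sq (Quotient.mk (permSetoid I J W) a) = ∑ j, eta I J (a.val j)) ∧
      Topology.IsEmbedding Sq := by
  have hinv : ∀ a : Fin J → (Fin I → ℝ), ∀ σ : Equiv.Perm (Fin J),
      ∑ j, eta I J ((a ∘ σ) j) = ∑ j, eta I J (a j) :=
    fun a σ => Equiv.sum_comp σ (fun j => eta I J (a j))
  refine ⟨hinv, ?_⟩
  set S : {a : Fin J → (Fin I → ℝ) // ∀ j, a j ∈ W} → (MIdx I J → ℝ) :=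
    fun a => ∑ j, eta I J (a.val j) with hSdef
  have hresp : ∀ a b : {a : Fin J → (Fin I → ℝ) // ∀ j, a j ∈ W},
      (permSetoid I J W).r a b → S a = S b := by
    rintro a b ⟨σ, hσ⟩
    rw [hSdef]
    simp only
    rw [hσ]
    exact (hinv a.val σ).symm
  refine ⟨Quotient.lift S hresp, fun a => rfl, ?_⟩
  -- compactness of the quotient
  have hKc : IsCompact {a : Fin J → (Fin I → ℝ) | ∀ j, a j ∈ W} := by
    have h1 : {a : Fin J → (Fin I → ℝ) | ∀ j, a j ∈ W}
        = Set.pi Set.univ (fun _ : Fin J => W) := by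
      ext a; simp [Set.mem_pi]
    rw [h1]
    exact isCompact_univ_pi (fun _ => hWc)
  haveI : CompactSpace {a : Fin J → (Fin I → ℝ) // ∀ j, a j ∈ W} :=
    isCompact_iff_compactSpace.mp hKc
  haveI : CompactSpace (Quotient (permSetoid I J W)) := Quotient.compactSpace
  -- continuity of S
  have hScont : Continuous S := by
    apply continuous_pi
    intro s
    have hrw : (fun a : {a : Fin J → (Fin I → ℝ) // ∀ j, a j ∈ W} => S a s)
        = fun a => ∑ j, ∏ i, (a.val j i) ^ (s.val i) := by
      funext a
      rw [hSdef]
      simp [eta, Finset.sum_apply]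
    rw [hrw]
    exact continuous_finset_sum _ fun j _ => continuous_finset_prod _ fun i _ =>
      (((continuous_apply i).comp ((continuous_apply j).comp continuous_subtype_val)).pow _)
  have hcont : Continuous (Quotient.lift S hresp) := hScont.quotient_lift hresp
  -- injectivity
  have hinj : Function.Injective (Quotient.lift S hresp) := by
    intro x y
    refine Quotient.inductionOn₂ x y ?_
    intro a b hab
    simp only [Quotient.lift_mk] at hab
    apply Quotient.sound
    have hpow : ∀ s : Fin I → ℕ, 1 ≤ ∑ i, s i → ∑ i, s i ≤ J →
        ∑ j, ∏ i, a.val j i ^ s i = ∑ j, ∏ i, b.val j i ^ s i := by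
      intro s hs1 hs2
      have := (Finset.sum_apply (⟨s, hs1, hs2⟩ : MIdx I J) Finset.univ (fun j => eta I J (a.val j))).symm.trans
        ((congrFun hab _).trans (Finset.sum_apply (⟨s, hs1, hs2⟩ : MIdx I J) Finset.univ (fun j => eta I J (b.val j))))
      simpa [hSdef, eta, Finset.sum_apply] using this
    obtain ⟨σ, hσ⟩ := perm_of_power_sums_eq I J a.val b.val hpow
    exact ⟨σ, hσ⟩
  exact (hcont.isClosedEmbedding hinj).isEmbedding
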